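/- Fix reals a > b > 0, w1 > 0 and λ > 0, define u1(x) = (w1/(2·ln 2)) · (a/(1 + a·x) − b/(1 + b·x)) − λ, set δ = 1/b − 1/a and β = (1/2)·√(δ·(δ + 2·w1/(λ·ln 2))) − (1/2)·(1/b + 1/a). Then β > −1/a (so 1 + a·β > 0 and 1 + b·β > 0), u1(β) = 0, and u1(x) < 0 for every x > β; moreover if u1(0) ≥ 0 then β ≥ 0. -/

import Mathlib

/-- `β` is the largest root of the confidential-message marginal utility `u1`:
`β > −1/a` (hence `1 + a·β > 0` and `1 + b·β > 0`), `u1 β = 0`, `u1 x < 0`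
for `x > β`, and if `u1 0 ≥ 0` then `β ≥ 0`. -/
theorem beta_largest_root (a b w1 lam : ℝ) (hb : 0 < b) (hba : b < a)
    (hw1 : 0 < w1) (hlam : 0 < lam) :
    let u1 : ℝ → ℝ := fun x =>
      w1 / (2 * Real.log 2) * (a / (1 + a * x) - b / (1 + b * x)) - lam
    let δ : ℝ := 1 / b - 1 / a
    let β : ℝ := (1 / 2) * Real.sqrt (δ * (δ + 2 * w1 / (lam * Real.log 2))) -
      (1 / 2) * (1 / b + 1 / a)
    β > -(1 / a) ∧ 1 + a * β > 0 ∧ 1 + b * β > 0 ∧ u1 β = 0 ∧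
      (∀ x : ℝ, β < x → u1 x < 0) ∧ (0 ≤ u1 0 → 0 ≤ β) := by
  intro u1 δ β
  have hL : (0:ℝ) < Real.log 2 := Real.log_pos (by norm_num)
  have ha : 0 < a := hb.trans hba
  have ha' : a ≠ 0 := ne_of_gt ha
  have hb' : b ≠ 0 := ne_of_gt hb
  have hlam' : lam ≠ 0 := ne_of_gt hlam
  have hL' : Real.log 2 ≠ 0 := ne_of_gt hL
  have hu1eq : ∀ x, u1 x =
      w1 / (2 * Real.log 2) * (a / (1 + a * x) - b / (1 + b * x)) - lam :=
    fun _ => rfl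
  have hδeq : δ = 1 / b - 1 / a := rfl
  have hβeq : β = (1 / 2) * Real.sqrt (δ * (δ + 2 * w1 / (lam * Real.log 2))) -
      (1 / 2) * (1 / b + 1 / a) := rfl
  clear_value u1 β δ
  subst hδeq
  set D : ℝ := (1 / b - 1 / a) * ((1 / b - 1 / a) + 2 * w1 / (lam * Real.log 2)) with hDdef
  have hδpos : 0 < 1 / b - 1 / a := by
    have : 1 / a < 1 / b := one_div_lt_one_div_of_lt hb hba
    linarith
  have ht : 0 < 2 * w1 / (lam * Real.log 2) := by positivity
  set s : ℝ := Real.sqrt D with hsdef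
  have hsnn : 0 ≤ s := Real.sqrt_nonneg D
  have hs2 : s ^ 2 = D := Real.sq_sqrt (by positivity)
  clear_value s
  rw [hDdef] at hs2
  clear hsdef
  clear_value D
  clear hDdef D
  have hsδ : 1 / b - 1 / a < s := by
    nlinarith [mul_pos hδpos ht]
  have hβa : β + 1 / a = (s - (1 / b - 1 / a)) / 2 := by rw [hβeq]; ring
  have hβb : β + 1 / b = (s + (1 / b - 1 / a)) / 2 := by rw [hβeq]; ring
  have hβgt : β > -(1 / a) := by linarith
  have h1a : 0 < 1 + a * β := by
    have h := mul_pos ha (show 0 < β + 1 / a by linarith)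
    have e : a * (β + 1 / a) = 1 + a * β := by field_simp; ring
    linarith [e ▸ h]
  have h1b : 0 < 1 + b * β := by
    have h := mul_pos hb (show 0 < β + 1 / b by linarith)
    have e : b * (β + 1 / b) = 1 + b * β := by field_simp; ring
    linarith [e ▸ h]
  have key : (1 + a * β) * (1 + b * β) * (2 * lam * Real.log 2) = w1 * (a - b) := by
    have expand : (1 + a * β) * (1 + b * β) = a * b * ((β + 1 / a) * (β + 1 / b)) := by
      field_simp; ring
    have h5 : ((s - (1 / b - 1 / a)) / 2) * ((s + (1 / b - 1 / a)) / 2) =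
        (1 / b - 1 / a) * (2 * w1 / (lam * Real.log 2)) / 4 := by
      linear_combination (1 / 4) * hs2
    rw [expand, hβa, hβb, h5]
    field_simp
    ring
  have hfrac : ∀ y : ℝ, (1 + a * y) ≠ 0 → (1 + b * y) ≠ 0 →
      a / (1 + a * y) - b / (1 + b * y) = (a - b) / ((1 + a * y) * (1 + b * y)) := by
    intro y h1 h2; rw [div_sub_div _ _ h1 h2]; ring
  have hu1β : u1 β = 0 := by
    rw [hu1eq, hfrac β h1a.ne' h1b.ne', sub_eq_zero]
    rw [div_mul_div_comm, div_eq_iff (by positivity)]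
    linear_combination (-1 : ℝ) * key
  refine ⟨hβgt, h1a, h1b, hu1β, ?_, ?_⟩
  · intro x hx
    have hx1 : 0 < 1 + a * x := by nlinarith [mul_pos ha (sub_pos.mpr hx)]
    have hx2 : 0 < 1 + b * x := by nlinarith [mul_pos hb (sub_pos.mpr hx)]
    have hPx : (1 + a * β) * (1 + b * β) < (1 + a * x) * (1 + b * x) := by
      nlinarith [mul_pos (sub_pos.mpr hx) (mul_pos ha h1b),
        mul_pos (sub_pos.mpr hx) (mul_pos hb hx1)]
    rw [hu1eq, hfrac x hx1.ne' hx2.ne', sub_neg]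
    have heq : w1 / (2 * Real.log 2) * ((a - b) / ((1 + a * β) * (1 + b * β))) = lam := by
      have h := hu1β
      rw [hu1eq, hfrac β h1a.ne' h1b.ne', sub_eq_zero] at h
      exact h
    calc w1 / (2 * Real.log 2) * ((a - b) / ((1 + a * x) * (1 + b * x)))
        < w1 / (2 * Real.log 2) * ((a - b) / ((1 + a * β) * (1 + b * β))) := by
          apply mul_lt_mul_of_pos_left _ (by positivity)
          exact div_lt_div_of_pos_left (by linarith) (by positivity) hPx
      _ = lam := heq
  · intro h0
    rw [hu1eq] at h0
    norm_num at h0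
    have h2L : (0:ℝ) < 2 * Real.log 2 := by positivity
    have h0' : 2 * lam * Real.log 2 ≤ w1 * (a - b) := by
      have h := mul_le_mul_of_nonneg_right h0 h2L.le
      have e : w1 / (2 * Real.log 2) * (a - b) * (2 * Real.log 2) = w1 * (a - b) := by
        field_simp
      rw [e] at h
      linarith [h]
    by_contra hneg
    push_neg at hneg
    have hq : 0 < a * (1 + b * β) + b := by linarith [mul_pos ha h1b]
    have hlt : (1 + a * β) * (1 + b * β) < 1 := by
      linarith [mul_pos (neg_pos.mpr hneg) hq]
    have hfin := mul_lt_mul_of_pos_right hlt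
      (show (0:ℝ) < 2 * lam * Real.log 2 by positivity)
    linarith [hfin, key, h0']
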